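/- arXiv:2406.11113 — 6 statements merged into one kernel-verified Lean document; each statement's English description precedes it below -/
import Mathlib

section
/- Let S and T be nonempty finite sets of positive integers, let s1 = min S and d = gcd of all elements of S ∪ T, and let d⁺ = gcd of all sums s+t with s ∈ S, t ∈ T. Then for any integer coefficients a_s (s ∈ S) and b_t (t ∈ T), the number Σ_{s∈S} a_s·s − Σ_{t∈T} b_t·t is congruent to (Σ_{s∈S} a_s + Σ_{t∈T} b_t)·s1 modulo d⁺. -/
/-- gcd of all sums `s + t` with `s ∈ S`, `t ∈ T`. -/
def sumGcd (S T : Finset ℕ) : ℕ := (S ×ˢ T).gcd (fun p => p.1 + p.2)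

/-- gcd of all elements of `S ∪ T`. -/
def unionGcd (S T : Finset ℕ) : ℕ := (S ∪ T).gcd id

/-- Arc of the Toeplitz digraph `D(T_n⟨S;T⟩)` on vertex set `{1,…,n}`. -/
def arc (n : ℕ) (S T : Finset ℕ) (u v : ℕ) : Prop :=
  u ∈ Finset.Icc 1 n ∧ v ∈ Finset.Icc 1 n ∧
    ((∃ s ∈ S, (v : ℤ) - u = s) ∨ (∃ t ∈ T, (u : ℤ) - v = t))

/-- There is a directed walk of length `m` from `u` to `v` in `D(T_n⟨S;T⟩)`. -/
def hasWalk (n : ℕ) (S T : Finset ℕ) (u v m : ℕ) : Prop :=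
  ∃ f : ℕ → ℕ, f 0 = u ∧ f m = v ∧ ∀ i < m, arc n S T (f i) (f (i + 1))

/-- `ℓ ∈ P_i(A)` for `A = T_n⟨S;T⟩`, where `dplus = gcd(S+T)` and `s1 = min S`. -/
def Pset (n dplus s1 : ℕ) (i : ℕ) (ℓ : ℤ) : Prop :=
  -(n : ℤ) < ℓ ∧ ℓ < n ∧ ℓ ≡ (i : ℤ) * s1 [ZMOD (dplus : ℤ)]

/-- `ℓ ∈ Q_i(A)` for `A = T_n⟨S;T⟩`. -/
def Qset (n : ℕ) (S T : Finset ℕ) (i : ℕ) (ℓ : ℤ) : Prop :=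
  -(n : ℤ) < ℓ ∧ ℓ < n ∧ ∃ a b : ℕ → ℕ,
    ((∑ s ∈ S, (a s : ℤ) * s) - ∑ t ∈ T, (b t : ℤ) * t) = ℓ ∧
    ((∑ s ∈ S, a s) + ∑ t ∈ T, b t) = i

/-- `ℓ ∈ R_i(A)` for `A = T_n⟨S;T⟩`. -/
def Rset (n : ℕ) (S T : Finset ℕ) (i : ℕ) (ℓ : ℤ) : Prop :=
  -(n : ℤ) < ℓ ∧ ℓ < n ∧ ∀ u ∈ Finset.Icc 1 n, ∀ v ∈ Finset.Icc 1 n,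
    (v : ℤ) - u = ℓ → hasWalk n S T u v i

/-- `T_n⟨S;T⟩` is walk-ensured (with `s1 = min S`). -/
def walkEnsured (n : ℕ) (S T : Finset ℕ) (s1 : ℕ) : Prop :=
  ∃ M : ℕ, 0 < M ∧ ∀ u ∈ Finset.Icc 1 n, ∀ v ∈ Finset.Icc 1 n, ∀ ℓ : ℕ, M ≤ ℓ →
    ((v : ℤ) - u ≡ (ℓ : ℤ) * s1 [ZMOD ((sumGcd S T : ℕ) : ℤ)]) → hasWalk n S T u v ℓ

theorem stmt0 (S T : Finset ℕ) (hS : S.Nonempty) (hT : T.Nonempty)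
    (hSpos : ∀ s ∈ S, 0 < s) (hTpos : ∀ t ∈ T, 0 < t)
    (a b : ℕ → ℤ) :
    ((∑ s ∈ S, a s * s) - ∑ t ∈ T, b t * t) ≡
      ((∑ s ∈ S, a s) + ∑ t ∈ T, b t) * (S.min' hS : ℤ) [ZMOD ((sumGcd S T : ℕ) : ℤ)] := by
  set d : ℤ := ((sumGcd S T : ℕ) : ℤ) with hdDef
  have hd : ∀ s ∈ S, ∀ t ∈ T, d ∣ (s : ℤ) + t := by
    intro s hs t ht
    have : (sumGcd S T) ∣ s + t :=
      Finset.gcd_dvd (show ((s,t) : ℕ × ℕ) ∈ S ×ˢ T from Finset.mem_product.2 ⟨hs, ht⟩)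
    rw [hdDef]
    exact_mod_cast this
  obtain ⟨t0, ht0⟩ := hT
  have hs1 : S.min' hS ∈ S := S.min'_mem hS
  rw [Int.modEq_iff_dvd]
  have key : ((∑ s ∈ S, a s) + ∑ t ∈ T, b t) * (S.min' hS : ℤ)
      - ((∑ s ∈ S, a s * s) - ∑ t ∈ T, b t * t)
      = (∑ s ∈ S, a s * ((S.min' hS : ℤ) - s))
        + ∑ t ∈ T, b t * ((S.min' hS : ℤ) + t) := by
    simp only [mul_sub, mul_add, Finset.sum_sub_distrib, Finset.sum_add_distrib,
      add_mul, Finset.sum_mul]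
    ring
  rw [key]
  apply dvd_add <;> apply Finset.dvd_sum <;> intro x hx
  · have h1 : d ∣ (S.min' hS : ℤ) - x := by
      have h1 := hd _ hs1 _ ht0
      have h2 := hd _ hx _ ht0
      have := dvd_sub h1 h2
      simpa using this
    exact Dvd.dvd.mul_left h1 _
  · exact Dvd.dvd.mul_left (hd _ hs1 _ hx) _
end

section
/- A Toeplitz matrix A = T_n⟨S; T⟩ is walk-ensured if and only if there exists a positive integer M such that P_i(A) = R_i(A) for every integer i ≥ M. -/
lemma sumGcd_dvd' (S T : Finset ℕ) {s t : ℕ} (hs : s ∈ S) (ht : t ∈ T) :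
    (sumGcd S T : ℤ) ∣ (s : ℤ) + t := by
  have h : sumGcd S T ∣ s + t := by
    exact Finset.gcd_dvd (f := fun p : ℕ × ℕ => p.1 + p.2)
      (Finset.mem_product.mpr ⟨hs, ht⟩ : (s, t) ∈ S ×ˢ T)
  exact_mod_cast Int.natCast_dvd_natCast.mpr h

lemma arc_modeq (n : ℕ) (S T : Finset ℕ) (hT : T.Nonempty) {s1 : ℕ} (hs1 : s1 ∈ S)
    {u v : ℕ} (h : arc n S T u v) :
    (v : ℤ) - u ≡ (s1 : ℤ) [ZMOD (sumGcd S T : ℤ)] := by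
  obtain ⟨t0, ht0⟩ := hT
  obtain ⟨_, _, ⟨s, hs, hsv⟩ | ⟨t, ht, htv⟩⟩ := h
  · rw [hsv]
    have h1 := sumGcd_dvd' S T hs ht0
    have h2 := sumGcd_dvd' S T hs1 ht0
    exact Int.modEq_iff_dvd.mpr (by simpa using dvd_sub h2 h1)
  · have hvu : (v : ℤ) - u = -t := by linarith
    rw [hvu]
    exact Int.modEq_iff_dvd.mpr (by simpa [sub_neg_eq_add, add_comm] using sumGcd_dvd' S T hs1 ht)

lemma walk_modeq (n : ℕ) (S T : Finset ℕ) (hT : T.Nonempty) {s1 : ℕ} (hs1 : s1 ∈ S) :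
    ∀ m u v, hasWalk n S T u v m →
      (v : ℤ) - u ≡ (m : ℤ) * s1 [ZMOD (sumGcd S T : ℤ)] := by
  intro m
  induction m with
  | zero =>
    rintro u v ⟨f, h0, hm, _⟩
    subst h0
    simp [hm.symm]
  | succ m ih =>
    rintro u v ⟨f, h0, hm, harc⟩
    have hw : hasWalk n S T u (f m) m :=
      ⟨f, h0, rfl, fun i hi => harc i (Nat.lt_succ_of_lt hi)⟩
    have h1 := ih u (f m) hw
    have h2 := arc_modeq n S T hT hs1 (harc m (Nat.lt_succ_self m))
    rw [hm] at h2
    have := h1.add h2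
    have heq : ((f m : ℤ) - u) + ((v : ℤ) - f m) = (v : ℤ) - u := by ring
    rw [heq] at this
    have heq2 : ((m : ℤ) * s1) + s1 = ((m + 1 : ℕ) : ℤ) * s1 := by push_cast; ring
    rwa [heq2] at this

lemma exists_uv (n : ℕ) (hn : 1 ≤ n) {ℓ : ℤ} (h1 : -(n : ℤ) < ℓ) (h2 : ℓ < n) :
    ∃ u ∈ Finset.Icc 1 n, ∃ v ∈ Finset.Icc 1 n, (v : ℤ) - u = ℓ := by
  rcases le_or_gt 0 ℓ with hpos | hneg
  · refine ⟨1, ?_, ℓ.toNat + 1, ?_, ?_⟩ <;> simp [Finset.mem_Icc] <;> omega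
  · refine ⟨(-ℓ).toNat + 1, ?_, 1, ?_, ?_⟩ <;> simp [Finset.mem_Icc] <;> omega

theorem stmt12 (n : ℕ) (S T : Finset ℕ) (hS : S.Nonempty) (hT : T.Nonempty)
    (hSsub : S ⊆ Finset.Icc 1 (n - 1)) (hTsub : T ⊆ Finset.Icc 1 (n - 1)) :
    walkEnsured n S T (S.min' hS) ↔
      ∃ M : ℕ, 0 < M ∧ ∀ i : ℕ, M ≤ i →
        ∀ ℓ : ℤ, (Pset n (sumGcd S T) (S.min' hS) i ℓ ↔ Rset n S T i ℓ) := by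
  set s1 := S.min' hS with hs1def
  have hs1 : s1 ∈ S := S.min'_mem hS
  have hn : 2 ≤ n := by
    have := hSsub hs1
    simp [Finset.mem_Icc] at this
    omega
  constructor
  · rintro ⟨M, hM, hwalk⟩
    refine ⟨M, hM, fun i hi ℓ => ?_⟩
    constructor
    · rintro ⟨hl1, hl2, hl3⟩
      refine ⟨hl1, hl2, fun u hu v hv huv => ?_⟩
      exact hwalk u hu v hv i hi (huv ▸ hl3)
    · rintro ⟨hl1, hl2, hR⟩
      refine ⟨hl1, hl2, ?_⟩
      obtain ⟨u, hu, v, hv, huv⟩ := exists_uv n (by omega) hl1 hl2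
      have hw := hR u hu v hv huv
      have := walk_modeq n S T hT hs1 i u v hw
      rw [huv] at this
      exact this
  · rintro ⟨M, hM, hPR⟩
    refine ⟨M, hM, fun u hu v hv ℓ hℓ hcong => ?_⟩
    simp only [Finset.mem_Icc] at hu hv
    have h1 : -(n : ℤ) < (v : ℤ) - u := by push_cast; omega
    have h2 : (v : ℤ) - u < n := by push_cast; omega
    have hP : Pset n (sumGcd S T) s1 ℓ ((v : ℤ) - u) := ⟨h1, h2, hcong⟩
    have hR := (hPR ℓ hℓ ((v : ℤ) - u)).mp hP
    exact hR.2.2 u (Finset.mem_Icc.mpr hu) v (Finset.mem_Icc.mpr hv) rfl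
end

section
/- Let D be the digraph of a walk-ensured Toeplitz matrix T_n⟨S; T⟩ and let d = gcd(S ∪ T). If u ≡ v (mod d) for vertices u, v ∈ {1,…,n}, then there exists a directed walk from u to v in D. -/
theorem stmt13 (n : ℕ) (S T : Finset ℕ) (hS : S.Nonempty) (hT : T.Nonempty)
    (hSsub : S ⊆ Finset.Icc 1 (n - 1)) (hTsub : T ⊆ Finset.Icc 1 (n - 1))
    (hwe : walkEnsured n S T (S.min' hS))
    (u v : ℕ) (hu : u ∈ Finset.Icc 1 n) (hv : v ∈ Finset.Icc 1 n)
    (huv : u ≡ v [MOD unionGcd S T]) :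
    ∃ m : ℕ, 0 < m ∧ hasWalk n S T u v m := by
  obtain ⟨M, hM, hWE⟩ := hwe
  set s1 := S.min' hS with hs1
  have hs1S : s1 ∈ S := S.min'_mem hS
  obtain ⟨t0, ht0⟩ := hT
  set dp := sumGcd S T with hdp
  set d := unionGcd S T with hd
  -- dp divides every s + t
  have hdpdvd : ∀ s ∈ S, ∀ t ∈ T, dp ∣ s + t := by
    intro s hs t ht
    exact Finset.gcd_dvd (show ((s, t) : ℕ × ℕ) ∈ S ×ˢ T from Finset.mem_product.mpr ⟨hs, ht⟩)
  -- d divides every element of S ∪ T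
  have hddvdS : ∀ s ∈ S, d ∣ s := by
    intro s hs
    exact Finset.gcd_dvd (f := id) (Finset.mem_union_left T hs)
  have hddvdT : ∀ t ∈ T, d ∣ t := by
    intro t ht
    exact Finset.gcd_dvd (f := id) (Finset.mem_union_right S ht)
  set g := Nat.gcd dp s1 with hg
  have hgt : ∀ t ∈ T, g ∣ t := by
    intro t ht
    have h1 : g ∣ s1 + t := (Nat.gcd_dvd_left dp s1).trans (hdpdvd s1 hs1S t ht)
    have h2 : g ∣ s1 := Nat.gcd_dvd_right dp s1
    have := Nat.dvd_sub h1 h2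
    simpa using this
  have hgs : ∀ s ∈ S, g ∣ s := by
    intro s hs
    have h1 : g ∣ s + t0 := (Nat.gcd_dvd_left dp s1).trans (hdpdvd s hs t0 ht0)
    have h2 : g ∣ t0 := hgt t0 ht0
    have := Nat.dvd_sub h1 h2
    simpa using this
  have hgd : g ∣ d := by
    apply Finset.dvd_gcd
    intro x hx
    rcases Finset.mem_union.mp hx with h | h
    · exact hgs x h
    · exact hgt x h
  have hdg : d ∣ g := by
    apply Nat.dvd_gcd
    · apply Finset.dvd_gcd
      rintro ⟨s, t⟩ hst
      obtain ⟨hs, ht⟩ := Finset.mem_product.mp hst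
      exact Dvd.dvd.add (hddvdS s hs) (hddvdT t ht)
    · exact hddvdS s1 hs1S
  have hge : g = d := Nat.dvd_antisymm hgd hdg
  -- d divides v - u
  have hdvu : (d : ℤ) ∣ (v : ℤ) - u := huv.dvd
  have hgvu : (g : ℤ) ∣ (v : ℤ) - u := by rw [hge]; exact hdvu
  obtain ⟨k, hk⟩ := hgvu
  -- Bezout
  have hbez : (g : ℤ) = s1 * Int.gcdA s1 dp + dp * Int.gcdB s1 dp := by
    have := Int.gcd_eq_gcd_ab (s1 : ℤ) (dp : ℤ)
    rw [hg, Nat.gcd_comm]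
    simpa [Int.gcd] using this
  set x : ℤ := k * Int.gcdA s1 dp with hx
  have hxmod : x * s1 ≡ (v : ℤ) - u [ZMOD (dp : ℤ)] := by
    have : x * s1 = ((v:ℤ) - u) - (dp : ℤ) * (Int.gcdB s1 dp * k) := by
      rw [hk, hbez]; ring
    rw [this]
    simpa using (Int.ModEq.sub_right ((dp : ℤ) * (Int.gcdB s1 dp * k))
      (Int.ModEq.refl ((v:ℤ) - u))).trans
      (by simp [Int.ModEq, Int.sub_emod, Int.mul_emod_right])
  -- dp is positive
  have hdppos : 0 < dp := by
    rcases Nat.eq_zero_or_pos dp with h | h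
    · exfalso
      have := hdpdvd s1 hs1S t0 ht0
      rw [h] at this
      have hs1pos : 1 ≤ s1 := (Finset.mem_Icc.mp (hSsub hs1S)).1
      omega
    · exact h
  -- choose ℓ
  set ℓ : ℕ := (x % (dp : ℤ)).toNat + M * dp with hℓ
  have hxnn : 0 ≤ x % (dp : ℤ) := Int.emod_nonneg x (by exact_mod_cast hdppos.ne')
  have hℓcast : (ℓ : ℤ) = x % (dp : ℤ) + (M : ℤ) * dp := by
    rw [hℓ]
    push_cast [Int.toNat_of_nonneg hxnn]
    ring
  have hℓM : M ≤ ℓ := by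
    have : M ≤ M * dp := Nat.le_mul_of_pos_right M hdppos
    omega
  have hℓmod : (ℓ : ℤ) ≡ x [ZMOD (dp : ℤ)] := by
    rw [hℓcast]
    calc x % (dp : ℤ) + (M : ℤ) * dp ≡ x % (dp : ℤ) + 0 [ZMOD (dp : ℤ)] :=
          Int.ModEq.add_left _ (Int.modEq_zero_iff_dvd.mpr ⟨M, by ring⟩)
      _ = x % (dp : ℤ) := by ring
      _ ≡ x [ZMOD (dp : ℤ)] := Int.emod_emod_of_dvd x dvd_rfl
  have hfinal : (v : ℤ) - u ≡ (ℓ : ℤ) * s1 [ZMOD ((dp : ℕ) : ℤ)] := by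
    have := (hℓmod.mul_right (s1 : ℤ)).trans hxmod
    exact this.symm
  exact ⟨ℓ, lt_of_lt_of_le hM hℓM, hWE u hu v hv ℓ hℓM hfinal⟩
end

section
/- Let A = T_n⟨S; T⟩ be a walk-ensured Toeplitz matrix with d⁺ = gcd{s+t : s∈S, t∈T} and d = gcd(S ∪ T). Then the matrix period of A equals d⁺/d, i.e., d⁺/d is the least positive integer p such that for some M and all m ≥ M, A^m = A^{m+p} over the Boolean semiring. -/
lemma hasWalk_succ {n : ℕ} {S T : Finset ℕ} {u v m : ℕ} :
    hasWalk n S T u v (m+1) ↔ ∃ w, hasWalk n S T u w m ∧ arc n S T w v := by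
  constructor
  · rintro ⟨f, h0, hm, hstep⟩
    exact ⟨f m, ⟨f, h0, rfl, fun i hi => hstep i (by omega)⟩, hm ▸ hstep m (by omega)⟩
  · rintro ⟨w, ⟨f, h0, hm, hstep⟩, harc⟩
    refine ⟨fun i => if i ≤ m then f i else v, by simp [h0], by simp, ?_⟩
    intro i hi
    rcases Nat.lt_or_ge i m with h | h
    · simpa [Nat.le_of_lt h, Nat.succ_le_of_lt h] using hstep i h
    · have hi' : i = m := by omega
      subst hi'
      simpa [hm] using harc

lemma arc_cong {n : ℕ} {S T : Finset ℕ} (hS : S.Nonempty) (hT : T.Nonempty)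
    {u v : ℕ} (h : arc n S T u v) :
    (v : ℤ) - u ≡ (S.min' hS : ℤ) [ZMOD ((sumGcd S T : ℕ) : ℤ)] := by
  obtain ⟨hu, hv, hcase⟩ := h
  have hs1 : S.min' hS ∈ S := S.min'_mem hS
  have ht1 : T.min' hT ∈ T := T.min'_mem hT
  rcases hcase with ⟨s, hs, heq⟩ | ⟨t, ht, heq⟩
  · rw [heq, Int.modEq_iff_dvd]
    have h1 : (sumGcd S T : ℤ) ∣ ((s : ℤ) + T.min' hT) := by
      exact_mod_cast Int.natCast_dvd_natCast.mpr
        (Finset.gcd_dvd (show ((s, T.min' hT)) ∈ S ×ˢ T from Finset.mem_product.mpr ⟨hs, ht1⟩))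
    have h2 : (sumGcd S T : ℤ) ∣ ((S.min' hS : ℤ) + T.min' hT) := by
      exact_mod_cast Int.natCast_dvd_natCast.mpr
        (Finset.gcd_dvd (show ((S.min' hS, T.min' hT)) ∈ S ×ˢ T from Finset.mem_product.mpr ⟨hs1, ht1⟩))
    have := dvd_sub h2 h1
    simpa using this
  · have heq' : (v : ℤ) - u = -(t : ℤ) := by linarith [heq]
    rw [heq', Int.modEq_iff_dvd]
    have h2 : (sumGcd S T : ℤ) ∣ ((S.min' hS : ℤ) + t) := by
      exact_mod_cast Int.natCast_dvd_natCast.mpr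
        (Finset.gcd_dvd (show ((S.min' hS, t)) ∈ S ×ˢ T from Finset.mem_product.mpr ⟨hs1, ht⟩))
    simpa [sub_neg_eq_add] using h2

lemma walk_cong {n : ℕ} {S T : Finset ℕ} (hS : S.Nonempty) (hT : T.Nonempty) :
    ∀ m, 0 < m → ∀ u v, hasWalk n S T u v m →
      u ∈ Finset.Icc 1 n ∧ v ∈ Finset.Icc 1 n ∧
        (v : ℤ) - u ≡ (m : ℤ) * (S.min' hS : ℤ) [ZMOD ((sumGcd S T : ℕ) : ℤ)] := by
  intro m
  induction m with
  | zero => intro h; omega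
  | succ m ih =>
    intro _ u v hw
    obtain ⟨w, hw1, harc⟩ := hasWalk_succ.mp hw
    rcases Nat.eq_zero_or_pos m with hm | hm
    · subst hm
      obtain ⟨f, h0, h1, _⟩ := hw1
      have hwu : w = u := by rw [← h0, ← h1]
      subst hwu
      refine ⟨harc.1, harc.2.1, ?_⟩
      simpa using arc_cong hS hT harc
    · obtain ⟨hu, hwmem, hcong⟩ := ih hm u w hw1
      refine ⟨hu, harc.2.1, ?_⟩
      have h2 := arc_cong hS hT harc
      have := hcong.add h2
      have heq : (v : ℤ) - u = ((w : ℤ) - u) + ((v : ℤ) - w) := by ring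
      rw [heq]
      calc ((w : ℤ) - u) + ((v : ℤ) - w)
          ≡ (m : ℤ) * (S.min' hS : ℤ) + (S.min' hS : ℤ) [ZMOD ((sumGcd S T : ℕ) : ℤ)] := this
        _ = ((m + 1 : ℕ) : ℤ) * (S.min' hS : ℤ) := by push_cast; ring

theorem stmt14 (n : ℕ) (S T : Finset ℕ) (hS : S.Nonempty) (hT : T.Nonempty)
    (hSsub : S ⊆ Finset.Icc 1 (n - 1)) (hTsub : T ⊆ Finset.Icc 1 (n - 1))
    (hwe : walkEnsured n S T (S.min' hS)) :
    IsLeast {p : ℕ | 0 < p ∧ ∃ M : ℕ, ∀ m : ℕ, M ≤ m → ∀ u v : ℕ,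
        (hasWalk n S T u v m ↔ hasWalk n S T u v (m + p))}
      (sumGcd S T / unionGcd S T) := by
  obtain ⟨M0, hM0pos, hM0⟩ := hwe
  set s1 := S.min' hS with hs1def
  set dp := sumGcd S T with hdpdef
  set d := unionGcd S T with hddef
  have hs1S : s1 ∈ S := S.min'_mem hS
  have ht1T : T.min' hT ∈ T := T.min'_mem hT
  set t1 := T.min' hT with ht1def
  have hs1mem := hSsub hs1S
  have ht1mem := hTsub ht1T
  rw [Finset.mem_Icc] at hs1mem ht1mem
  have hn : 2 ≤ n := by omega
  have hdp_dvd : dp ∣ s1 + t1 := Finset.gcd_dvd (show ((s1, t1)) ∈ S ×ˢ T from Finset.mem_product.mpr ⟨hs1S, ht1T⟩)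
  have hdp_pos : 0 < dp := by
    rcases Nat.eq_zero_or_pos dp with h | h
    · rw [h] at hdp_dvd
      have := Nat.eq_zero_of_zero_dvd hdp_dvd
      omega
    · exact h
  have hd_dvd_s1 : d ∣ s1 := Finset.gcd_dvd (Finset.mem_union_left T hs1S)
  have hd_pos : 0 < d := by
    rcases Nat.eq_zero_or_pos d with h | h
    · rw [h] at hd_dvd_s1
      have := Nat.eq_zero_of_zero_dvd hd_dvd_s1
      omega
    · exact h
  have hd_dvd_dp : d ∣ dp := by
    apply Finset.dvd_gcd
    rintro ⟨s, t⟩ hst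
    obtain ⟨hs, ht⟩ := Finset.mem_product.mp hst
    exact dvd_add (Finset.gcd_dvd (Finset.mem_union_left T hs))
      (Finset.gcd_dvd (Finset.mem_union_right S ht))
  set q := dp / d with hqdef
  have hq_pos : 0 < q := Nat.div_pos (Nat.le_of_dvd hdp_pos hd_dvd_dp) hd_pos
  have hqd : q * d = dp := Nat.div_mul_cancel hd_dvd_dp
  -- dp divides q * s1
  have hdp_qs1 : dp ∣ q * s1 := by
    obtain ⟨k, hk⟩ := hd_dvd_s1
    exact ⟨k, by rw [hk, ← mul_assoc, hqd]⟩
  constructor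
  · -- membership
    refine ⟨hq_pos, M0, ?_⟩
    intro m hm u v
    have hm1 : 0 < m := lt_of_lt_of_le hM0pos hm
    constructor
    · intro hw
      obtain ⟨hu, hv, hcong⟩ := walk_cong hS hT m hm1 u v hw
      apply hM0 u hu v hv (m + q) (by omega)
      refine hcong.trans ?_
      rw [Int.modEq_iff_dvd]
      have : ((m + q : ℕ) : ℤ) * s1 - (m : ℤ) * s1 = ((q * s1 : ℕ) : ℤ) := by
        push_cast; ring
      rw [this]
      exact_mod_cast Int.natCast_dvd_natCast.mpr hdp_qs1
    · intro hw
      obtain ⟨hu, hv, hcong⟩ := walk_cong hS hT (m + q) (by omega) u v hw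
      apply hM0 u hu v hv m hm
      refine hcong.trans ?_
      rw [Int.modEq_iff_dvd]
      have : (m : ℤ) * s1 - ((m + q : ℕ) : ℤ) * s1 = -((q * s1 : ℕ) : ℤ) := by
        push_cast; ring
      rw [this]
      exact dvd_neg.mpr (by exact_mod_cast Int.natCast_dvd_natCast.mpr hdp_qs1)
  · -- lower bound
    rintro p ⟨hp_pos, M', hM'⟩
    set m := dp * (M0 + M' + 1) with hmdef
    have hmM0 : M0 ≤ m := by
      calc M0 ≤ 1 * (M0 + M' + 1) := by omega
        _ ≤ dp * (M0 + M' + 1) := Nat.mul_le_mul_right _ hdp_pos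
    have hmM' : M' ≤ m := by
      calc M' ≤ 1 * (M0 + M' + 1) := by omega
        _ ≤ dp * (M0 + M' + 1) := Nat.mul_le_mul_right _ hdp_pos
    have h1mem : (1 : ℕ) ∈ Finset.Icc 1 n := Finset.mem_Icc.mpr ⟨le_refl 1, by omega⟩
    have hcong0 : ((1 : ℕ) : ℤ) - ((1 : ℕ) : ℤ) ≡ (m : ℤ) * s1 [ZMOD ((dp : ℕ) : ℤ)] := by
      rw [Int.modEq_iff_dvd]
      have : (m : ℤ) * s1 - (((1 : ℕ) : ℤ) - ((1 : ℕ) : ℤ)) = ((m * s1 : ℕ) : ℤ) := by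
        push_cast; ring
      rw [this]
      exact_mod_cast Int.natCast_dvd_natCast.mpr ⟨(M0 + M' + 1) * s1, by rw [hmdef]; ring⟩
    have hwalk_m : hasWalk n S T 1 1 m := hM0 1 h1mem 1 h1mem m hmM0 hcong0
    have hwalk_mp : hasWalk n S T 1 1 (m + p) := (hM' m hmM' 1 1).mp hwalk_m
    have hcong1 := (walk_cong hS hT (m + p) (by omega) 1 1 hwalk_mp).2.2
    -- dp ∣ p * s1
    have hdp_ps1 : dp ∣ p * s1 := by
      rw [Int.modEq_iff_dvd] at hcong1
      have heq : ((m + p : ℕ) : ℤ) * s1 - (((1 : ℕ) : ℤ) - ((1 : ℕ) : ℤ))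
          = ((m * s1 + p * s1 : ℕ) : ℤ) := by push_cast; ring
      rw [heq] at hcong1
      have hA : dp ∣ m * s1 + p * s1 := by exact_mod_cast hcong1
      have hB : dp ∣ m * s1 := ⟨(M0 + M' + 1) * s1, by rw [hmdef]; ring⟩
      have := Nat.dvd_sub hA hB
      simpa using this
    -- dp ∣ p * x for all x in S ∪ T
    have hdvd : ∀ x ∈ S ∪ T, dp ∣ p * x := by
      intro x hx
      rcases Finset.mem_union.mp hx with hxS | hxT
      · have h1 : dp ∣ p * (x + t1) :=
          Dvd.dvd.mul_left (Finset.gcd_dvd (show ((x, t1)) ∈ S ×ˢ T from Finset.mem_product.mpr ⟨hxS, ht1T⟩)) p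
        have h2 : dp ∣ p * (s1 + t1) := Dvd.dvd.mul_left hdp_dvd p
        have hA : dp ∣ p * s1 + p * (x + t1) := dvd_add hdp_ps1 h1
        have hB : dp ∣ p * (s1 + t1) := h2
        have hsub := Nat.dvd_sub hA hB
        have heq : p * s1 + p * (x + t1) - p * (s1 + t1) = p * x := by
          have : p * s1 + p * (x + t1) = p * (s1 + t1) + p * x := by ring
          omega
        rwa [heq] at hsub
      · have h1 : dp ∣ p * (s1 + x) :=
          Dvd.dvd.mul_left (Finset.gcd_dvd (show ((s1, x)) ∈ S ×ˢ T from Finset.mem_product.mpr ⟨hs1S, hxT⟩)) p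
        have hsub := Nat.dvd_sub h1 hdp_ps1
        have heq : p * (s1 + x) - p * s1 = p * x := by
          have : p * (s1 + x) = p * s1 + p * x := by ring
          omega
        rwa [heq] at hsub
    -- dp ∣ p * d
    have hdp_pd : dp ∣ p * d := by
      have := Finset.dvd_gcd (fun x hx => hdvd x hx : ∀ x ∈ S ∪ T, dp ∣ (fun y => p * id y) x)
      rwa [Finset.gcd_mul_left, normalize_eq] at this
    -- conclude q ≤ p
    have : q ∣ p := by
      have h : q * d ∣ p * d := hqd ▸ hdp_pd
      exact (Nat.mul_dvd_mul_iff_right hd_pos).mp h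
    exact Nat.le_of_dvd hp_pos this
end

section
/- Let A = T_n⟨S; T⟩ be a walk-ensured Toeplitz matrix with d⁺ = gcd{s+t : s∈S, t∈T} ≤ n. Then there exists M such that for all ℓ ≥ M and all x, y ∈ {1,…,n}: there exists z ∈ {1,…,n} with directed walks of length ℓ from x to z and from y to z in D(A), if and only if x ≡ y (mod d⁺). In particular, the ℓ-step competition graph of D(A) is eventually constant, equal to the graph whose adjacency matrix is the symmetric Toeplitz matrix T_n⟨d⁺, 2d⁺, …, ⌊n/d⁺⌋d⁺⟩. -/
lemma arc_step_mod (n : ℕ) (S T : Finset ℕ) (hS : S.Nonempty) (t0 : ℕ) (ht0 : t0 ∈ T)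
    {a b : ℕ} (h : arc n S T a b) :
    (b : ℤ) - a ≡ (S.min' hS : ℤ) [ZMOD ((sumGcd S T : ℕ) : ℤ)] := by
  have hdvd : ∀ s ∈ S, ∀ t ∈ T, ((sumGcd S T : ℕ) : ℤ) ∣ ((s : ℤ) + t) := by
    intro s hs t ht
    have : sumGcd S T ∣ s + t :=
      Finset.gcd_dvd (Finset.mem_product.mpr ⟨hs, ht⟩ : (s, t) ∈ S ×ˢ T)
    exact_mod_cast Int.natCast_dvd_natCast.mpr this
  have hs1 : S.min' hS ∈ S := S.min'_mem hS
  rcases h.2.2 with ⟨s, hs, heq⟩ | ⟨t, ht, heq⟩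
  · rw [Int.modEq_comm, Int.modEq_iff_dvd, heq]
    have h1 := hdvd s hs t0 ht0
    have h2 := hdvd (S.min' hS) hs1 t0 ht0
    have : ((s : ℤ) + t0) - ((S.min' hS : ℤ) + t0) = (s : ℤ) - S.min' hS := by ring
    have := dvd_sub h1 h2
    rw [show ((s : ℤ) + t0) - ((S.min' hS : ℤ) + t0) = (s : ℤ) - S.min' hS by ring] at this
    exact this
  · rw [Int.modEq_comm, Int.modEq_iff_dvd]
    have heq' : (b : ℤ) - a = -t := by linarith
    rw [heq', show (-(t:ℤ)) - (S.min' hS : ℤ) = -((S.min' hS : ℤ) + t) by ring]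
    exact dvd_neg.mpr (hdvd _ hs1 _ ht)

lemma walk_mod (n : ℕ) (S T : Finset ℕ) (hS : S.Nonempty) (t0 : ℕ) (ht0 : t0 ∈ T) :
    ∀ m u v, hasWalk n S T u v m →
      (v : ℤ) - u ≡ (m : ℤ) * (S.min' hS : ℤ) [ZMOD ((sumGcd S T : ℕ) : ℤ)] := by
  intro m
  induction m with
  | zero =>
    rintro u v ⟨f, h0, hm, _⟩
    rw [← h0, hm]
    simp [Int.ModEq.refl]
  | succ m ih =>
    rintro u v ⟨f, h0, hm, harc⟩
    have ihw : (f m : ℤ) - u ≡ (m : ℤ) * (S.min' hS : ℤ) [ZMOD ((sumGcd S T : ℕ) : ℤ)] :=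
      ih u (f m) ⟨f, h0, rfl, fun i hi => harc i (by omega)⟩
    have hstep : (v : ℤ) - f m ≡ (S.min' hS : ℤ) [ZMOD ((sumGcd S T : ℕ) : ℤ)] := by
      have := arc_step_mod n S T hS t0 ht0 (harc m (Nat.lt_succ_self m))
      rwa [hm] at this
    have := ihw.add hstep
    have heq : ((f m : ℤ) - u) + ((v : ℤ) - f m) = (v : ℤ) - u := by ring
    rw [heq] at this
    calc (v : ℤ) - u ≡ (m : ℤ) * (S.min' hS : ℤ) + (S.min' hS : ℤ)
          [ZMOD ((sumGcd S T : ℕ) : ℤ)] := this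
      _ = ((m : ℤ) + 1) * (S.min' hS : ℤ) := by ring
      _ = ((m + 1 : ℕ) : ℤ) * (S.min' hS : ℤ) := by push_cast; ring

theorem stmt15 (n : ℕ) (S T : Finset ℕ) (hS : S.Nonempty) (hT : T.Nonempty)
    (hSsub : S ⊆ Finset.Icc 1 (n - 1)) (hTsub : T ⊆ Finset.Icc 1 (n - 1))
    (hwe : walkEnsured n S T (S.min' hS))
    (hdplus : sumGcd S T ≤ n) :
    ∃ M : ℕ, ∀ ℓ : ℕ, M ≤ ℓ → ∀ x ∈ Finset.Icc 1 n, ∀ y ∈ Finset.Icc 1 n,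
      ((∃ z ∈ Finset.Icc 1 n, hasWalk n S T x z ℓ ∧ hasWalk n S T y z ℓ) ↔
        x ≡ y [MOD sumGcd S T]) := by
  obtain ⟨M, hM0, hMwe⟩ := hwe
  obtain ⟨t0, ht0⟩ := hT
  set d := sumGcd S T with hd
  set s1 := S.min' hS with hs1def
  have hs1S : s1 ∈ S := S.min'_mem hS
  -- d > 0
  have hdpos : 0 < d := by
    rcases Nat.eq_zero_or_pos d with h0 | h
    · exfalso
      have : d ∣ s1 + t0 :=
        Finset.gcd_dvd (Finset.mem_product.mpr ⟨hs1S, ht0⟩ : (s1, t0) ∈ S ×ˢ T)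
      rw [h0] at this
      have := Nat.eq_zero_of_zero_dvd this
      have hs1' := hSsub hs1S
      simp only [Finset.mem_Icc] at hs1'
      omega
    · exact h
  refine ⟨M, fun ℓ hℓ x hx y hy => ?_⟩
  constructor
  · rintro ⟨z, hz, hxz, hyz⟩
    have h1 := walk_mod n S T hS t0 ht0 ℓ x z hxz
    have h2 := walk_mod n S T hS t0 ht0 ℓ y z hyz
    have : (z : ℤ) - x ≡ (z : ℤ) - y [ZMOD ((d : ℕ) : ℤ)] := h1.trans h2.symm
    have hxy : (x : ℤ) ≡ (y : ℤ) [ZMOD ((d : ℕ) : ℤ)] := by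
      have := (Int.ModEq.refl ((z : ℤ))).sub this
      simpa using this
    rw [Nat.modEq_iff_dvd]
    rw [Int.modEq_iff_dvd] at hxy
    exact hxy
  · intro hxy
    -- choose z in [1, d] with z ≡ x + ℓ * s1 (mod d)
    have hdz : ((d : ℕ) : ℤ) ≠ 0 := by exact_mod_cast hdpos.ne'
    set r : ℤ := ((x : ℤ) + (ℓ : ℤ) * s1) % d with hrdef
    have hr0 : 0 ≤ r := Int.emod_nonneg _ hdz
    have hrd : r < d := Int.emod_lt_of_pos _ (by exact_mod_cast hdpos)
    set z : ℕ := if r = 0 then d else r.toNat with hzdef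
    have hz1 : 1 ≤ z := by
      by_cases h : r = 0
      · simp [hzdef, h]; omega
      · have : 0 < r := lt_of_le_of_ne hr0 (Ne.symm h)
        simp only [hzdef, if_neg h]
        omega
    have hzd : z ≤ d := by
      by_cases h : r = 0
      · simp [hzdef, h]
      · simp only [hzdef, if_neg h]; omega
    have hzn : z ∈ Finset.Icc 1 n := Finset.mem_Icc.mpr ⟨hz1, le_trans hzd hdplus⟩
    have hzmod : (z : ℤ) ≡ (x : ℤ) + (ℓ : ℤ) * s1 [ZMOD ((d : ℕ) : ℤ)] := by
      have hbase : r ≡ (x : ℤ) + (ℓ : ℤ) * s1 [ZMOD ((d : ℕ) : ℤ)] := by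
        rw [hrdef]
        exact Int.emod_emod_of_dvd _ dvd_rfl
      by_cases h : r = 0
      · have : (z : ℤ) = (d : ℤ) := by simp [hzdef, h]
        rw [this]
        calc (d : ℤ) ≡ 0 [ZMOD ((d : ℕ) : ℤ)] := Int.modEq_zero_iff_dvd.mpr dvd_rfl
          _ = r := h.symm
          _ ≡ (x : ℤ) + (ℓ : ℤ) * s1 [ZMOD ((d : ℕ) : ℤ)] := hbase
      · have : (z : ℤ) = r := by
          simp only [hzdef, if_neg h]
          exact Int.toNat_of_nonneg hr0
        rw [this]; exact hbase
    have hwx : hasWalk n S T x z ℓ := by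
      apply hMwe x hx z hzn ℓ hℓ
      have : (z : ℤ) - x ≡ ((x : ℤ) + (ℓ : ℤ) * s1) - x [ZMOD ((d : ℕ) : ℤ)] :=
        hzmod.sub (Int.ModEq.refl _)
      simpa using this
    have hwy : hasWalk n S T y z ℓ := by
      apply hMwe y hy z hzn ℓ hℓ
      have hxy' : (x : ℤ) ≡ (y : ℤ) [ZMOD ((d : ℕ) : ℤ)] := by
        rw [Int.modEq_iff_dvd]
        rw [Nat.modEq_iff_dvd] at hxy
        exact hxy
      have : (z : ℤ) - y ≡ ((x : ℤ) + (ℓ : ℤ) * s1) - x [ZMOD ((d : ℕ) : ℤ)] :=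
        hzmod.sub hxy'.symm
      simpa using this
    exact ⟨z, hzn, hwx, hwy⟩
end

section
/- Let A = T_n⟨S; T⟩ be a walk-ensured Toeplitz matrix, and let S*, T* ⊆ {1,…,n−1} with S ⊆ S*, T ⊆ T*. If gcd{s+t : s∈S, t∈T} = gcd{s+t : s∈S*, t∈T*}, then there exists M such that A^m = B^m for all m ≥ M, where B = T_n⟨S*; T*⟩; in particular A and B have the same matrix period, which equals gcd(S+T)/gcd(S∪T). -/
lemma walk_mono' {n : ℕ} {S T S' T' : Finset ℕ} (hSs : S ⊆ S') (hTs : T ⊆ T')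
    {u v m : ℕ} (h : hasWalk n S T u v m) : hasWalk n S' T' u v m := by
  obtain ⟨f, h0, hm, harc⟩ := h
  refine ⟨f, h0, hm, fun i hi => ?_⟩
  obtain ⟨hu, hv, hstep⟩ := harc i hi
  exact ⟨hu, hv, hstep.imp (fun ⟨s, hs, he⟩ => ⟨s, hSs hs, he⟩)
    (fun ⟨t, ht, he⟩ => ⟨t, hTs ht, he⟩)⟩

lemma walk_mem' {n : ℕ} {S T : Finset ℕ} {u v m : ℕ} (h : hasWalk n S T u v m)
    (hm : 1 ≤ m) : u ∈ Finset.Icc 1 n ∧ v ∈ Finset.Icc 1 n := by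
  obtain ⟨f, h0, hmv, harc⟩ := h
  constructor
  · rw [← h0]; exact (harc 0 hm).1
  · rw [← hmv]
    have := harc (m - 1) (by omega)
    have hm1 : m - 1 + 1 = m := by omega
    rw [hm1] at this
    exact this.2.1

lemma walk_residue' {n d s1 : ℕ} {S T : Finset ℕ}
    (hstep : ∀ u v, arc n S T u v → ((v : ℤ) - u) ≡ (s1 : ℤ) [ZMOD (d : ℤ)]) :
    ∀ m u v, hasWalk n S T u v m → ((v : ℤ) - u) ≡ (m : ℤ) * s1 [ZMOD (d : ℤ)] := by
  intro m
  induction m with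
  | zero =>
    intro u v ⟨f, h0, hm, _⟩
    simp [← h0, ← hm, Int.ModEq.refl]
  | succ m ih =>
    intro u v ⟨f, h0, hm, harc⟩
    have h1 : hasWalk n S T u (f m) m := ⟨f, h0, rfl, fun i hi => harc i (by omega)⟩
    have h2 := hstep (f m) v (by rw [← hm]; exact harc m (by omega))
    have h3 := (ih u (f m) h1).add h2
    have key : ((f m : ℤ) - u) + ((v : ℤ) - f m) = (v : ℤ) - u := by ring
    rw [key] at h3
    calc ((v : ℤ) - u) ≡ (m : ℤ) * s1 + s1 [ZMOD (d : ℤ)] := h3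
      _ = ((m : ℕ) + 1 : ℤ) * s1 := by ring

theorem stmt16 (n : ℕ) (S T Sstar Tstar : Finset ℕ)
    (hS : S.Nonempty) (hT : T.Nonempty)
    (hSsub : S ⊆ Sstar) (hTsub : T ⊆ Tstar)
    (hSstar : Sstar ⊆ Finset.Icc 1 (n - 1)) (hTstar : Tstar ⊆ Finset.Icc 1 (n - 1))
    (hwe : walkEnsured n S T (S.min' hS))
    (hgcd : sumGcd S T = sumGcd Sstar Tstar) :
    (∃ M : ℕ, ∀ m : ℕ, M ≤ m → ∀ u v : ℕ,
        (hasWalk n S T u v m ↔ hasWalk n Sstar Tstar u v m)) ∧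
    IsLeast {p : ℕ | 0 < p ∧ ∃ M : ℕ, ∀ m : ℕ, M ≤ m → ∀ u v : ℕ,
        (hasWalk n Sstar Tstar u v m ↔ hasWalk n Sstar Tstar u v (m + p))}
      (sumGcd S T / unionGcd S T) := by
  obtain ⟨M, hM0, hMwalk⟩ := hwe
  set s1 := S.min' hS with hs1def
  set t1 := T.min' hT with ht1def
  set d := sumGcd S T with hddef
  set g := unionGcd S T with hgdef
  have hs1S : s1 ∈ S := S.min'_mem hS
  have ht1T : t1 ∈ T := T.min'_mem hT
  have hs1b := Finset.mem_Icc.mp (hSstar (hSsub hs1S))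
  have ht1b := Finset.mem_Icc.mp (hTstar (hTsub ht1T))
  have hn2 : 2 ≤ n := by omega
  have ddvd : ∀ s ∈ Sstar, ∀ t ∈ Tstar, d ∣ s + t := by
    intro s hs t ht
    rw [hgcd]
    have hmem : (s, t) ∈ Sstar ×ˢ Tstar := Finset.mem_product.mpr ⟨hs, ht⟩
    exact Finset.gcd_dvd hmem
  have dd11 : d ∣ s1 + t1 := ddvd s1 (hSsub hs1S) t1 (hTsub ht1T)
  have dpos : 0 < d := by
    rcases Nat.eq_zero_or_pos d with h | h
    · rw [h] at dd11; rw [zero_dvd_iff] at dd11; omega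
    · exact h
  have dle : d ≤ 2 * n - 2 := le_trans (Nat.le_of_dvd (by omega) dd11) (by omega)
  -- congruences mod d
  have congS : ∀ s ∈ Sstar, ((s : ℤ)) ≡ (s1 : ℤ) [ZMOD (d : ℤ)] := by
    intro s hs
    rw [Int.modEq_iff_dvd]
    have h1 : (d : ℤ) ∣ ((s + t1 : ℕ) : ℤ) :=
      Int.natCast_dvd_natCast.mpr (ddvd s hs t1 (hTsub ht1T))
    have h2 : (d : ℤ) ∣ ((s1 + t1 : ℕ) : ℤ) := Int.natCast_dvd_natCast.mpr dd11
    have h3 := dvd_sub h2 h1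
    have e : ((s1 + t1 : ℕ) : ℤ) - ((s + t1 : ℕ) : ℤ) = (s1 : ℤ) - s := by push_cast; ring
    rwa [e] at h3
  have congT : ∀ t ∈ Tstar, ((t : ℤ)) ≡ (-(s1 : ℤ)) [ZMOD (d : ℤ)] := by
    intro t ht
    rw [Int.modEq_iff_dvd]
    have h1 : (d : ℤ) ∣ ((s1 + t : ℕ) : ℤ) :=
      Int.natCast_dvd_natCast.mpr (ddvd s1 (hSsub hs1S) t ht)
    have h3 := dvd_neg.mpr h1
    have e : -((s1 + t : ℕ) : ℤ) = -(s1 : ℤ) - t := by push_cast; ring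
    rwa [e] at h3
  have arcStep : ∀ u v, arc n Sstar Tstar u v →
      ((v : ℤ) - u) ≡ (s1 : ℤ) [ZMOD (d : ℤ)] := by
    rintro u v ⟨-, -, (⟨s, hs, he⟩ | ⟨t, ht, he⟩)⟩
    · rw [he]; exact congS s hs
    · have hvu : (v : ℤ) - u = -(t : ℤ) := by omega
      rw [hvu]
      have h := (congT t ht).neg
      simpa using h
  have walkResB := walk_residue' arcStep
  -- the key characterization of long walks in B
  have char : ∀ m, M ≤ m → ∀ u v, (hasWalk n Sstar Tstar u v m ↔
      (u ∈ Finset.Icc 1 n ∧ v ∈ Finset.Icc 1 n ∧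
        ((v : ℤ) - u) ≡ (m : ℤ) * s1 [ZMOD (d : ℤ)])) := by
    intro m hm u v
    constructor
    · intro h
      obtain ⟨hu, hv⟩ := walk_mem' h (by omega)
      exact ⟨hu, hv, walkResB m u v h⟩
    · rintro ⟨hu, hv, hc⟩
      exact walk_mono' hSsub hTsub (hMwalk u hu v hv m hm hc)
  -- every residue mod d is realized by some pair of vertices
  have realize : ∀ r : ℤ, ∃ u v, u ∈ Finset.Icc 1 n ∧ v ∈ Finset.Icc 1 n ∧
      ((v : ℤ) - u) ≡ r [ZMOD (d : ℤ)] := by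
    intro r
    have hd0 : (0 : ℤ) < d := by exact_mod_cast dpos
    have hnn : 0 ≤ r % d := Int.emod_nonneg r (by omega)
    have hlt : r % (d : ℤ) < d := Int.emod_lt_of_pos r hd0
    have hmod : (r % (d : ℤ)) ≡ r [ZMOD (d : ℤ)] := Int.emod_emod_of_dvd r dvd_rfl
    set ℓ0 := (r % (d : ℤ)).toNat with hl0def
    have hl0 : (ℓ0 : ℤ) = r % d := Int.toNat_of_nonneg hnn
    have hl0lt : ℓ0 < d := by omega
    by_cases hc : ℓ0 ≤ n - 1
    · refine ⟨1, 1 + ℓ0, Finset.mem_Icc.mpr (by omega), Finset.mem_Icc.mpr (by omega), ?_⟩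
      have e : ((1 + ℓ0 : ℕ) : ℤ) - (1 : ℕ) = (ℓ0 : ℤ) := by push_cast; ring
      rw [e, hl0]; exact hmod
    · refine ⟨1 + (d - ℓ0), 1, Finset.mem_Icc.mpr (by omega), Finset.mem_Icc.mpr (by omega), ?_⟩
      have e : ((1 : ℕ) : ℤ) - ((1 + (d - ℓ0) : ℕ) : ℤ) = (ℓ0 : ℤ) - d := by
        push_cast [Nat.cast_sub (le_of_lt hl0lt)]; ring
      rw [e, hl0]
      exact (Int.ModEq.symm (Int.modEq_iff_dvd.mpr ⟨-1, by ring⟩)).trans hmod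
  -- gcd facts
  have gdvd_s1 : g ∣ s1 := Finset.gcd_dvd (Finset.mem_union_left _ hs1S)
  have gdvd_d : g ∣ d := by
    refine Finset.dvd_gcd fun p hp => ?_
    obtain ⟨hp1, hp2⟩ := Finset.mem_product.mp hp
    exact dvd_add (Finset.gcd_dvd (Finset.mem_union_left _ hp1))
      (Finset.gcd_dvd (Finset.mem_union_right _ hp2))
  have gpos : 0 < g := by
    rcases Nat.eq_zero_or_pos g with h | h
    · rw [h, zero_dvd_iff] at gdvd_s1; omega
    · exact h
  have e_eq : Nat.gcd d s1 = g := by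
    apply Nat.dvd_antisymm
    · refine Finset.dvd_gcd fun x hx => ?_
      have hed : ((Nat.gcd d s1 : ℕ) : ℤ) ∣ (d : ℤ) :=
        Int.natCast_dvd_natCast.mpr (Nat.gcd_dvd_left _ _)
      have hes : ((Nat.gcd d s1 : ℕ) : ℤ) ∣ (s1 : ℤ) :=
        Int.natCast_dvd_natCast.mpr (Nat.gcd_dvd_right _ _)
      rcases Finset.mem_union.mp hx with hxS | hxT
      · have h1 : (d : ℤ) ∣ ((x + t1 : ℕ) : ℤ) :=
          Int.natCast_dvd_natCast.mpr (ddvd x (hSsub hxS) t1 (hTsub ht1T))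
        have h2 : (d : ℤ) ∣ ((s1 + t1 : ℕ) : ℤ) := Int.natCast_dvd_natCast.mpr dd11
        have h3 := dvd_add (dvd_sub (hed.trans h1) (hed.trans h2)) hes
        have e : ((x + t1 : ℕ) : ℤ) - ((s1 + t1 : ℕ) : ℤ) + (s1 : ℤ) = (x : ℤ) := by
          push_cast; ring
        rw [e] at h3
        exact_mod_cast h3
      · have h1 : (d : ℤ) ∣ ((s1 + x : ℕ) : ℤ) :=
          Int.natCast_dvd_natCast.mpr (ddvd s1 (hSsub hs1S) x (hTsub hxT))
        have h3 := dvd_sub (hed.trans h1) hes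
        have e : ((s1 + x : ℕ) : ℤ) - (s1 : ℤ) = (x : ℤ) := by push_cast; ring
        rw [e] at h3
        exact_mod_cast h3
    · exact Nat.dvd_gcd gdvd_d gdvd_s1
  have epos : 0 < Nat.gcd d s1 := by omega
  have dvd_iff : ∀ q : ℕ, (d ∣ q * s1 ↔ d / g ∣ q) := by
    intro q
    rw [← e_eq]
    constructor
    · intro h
      have hco : Nat.Coprime (d / Nat.gcd d s1) (s1 / Nat.gcd d s1) :=
        Nat.coprime_div_gcd_div_gcd epos
      apply hco.dvd_of_dvd_mul_right
      have h1 : d / Nat.gcd d s1 * Nat.gcd d s1 ∣ (q * (s1 / Nat.gcd d s1)) * Nat.gcd d s1 := by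
        rw [Nat.div_mul_cancel (Nat.gcd_dvd_left d s1), mul_assoc,
          Nat.div_mul_cancel (Nat.gcd_dvd_right d s1)]
        exact h
      exact (Nat.mul_dvd_mul_iff_right epos).mp h1
    · intro h
      have h2 : (d / Nat.gcd d s1) * Nat.gcd d s1 ∣ q * s1 :=
        mul_dvd_mul h (Nat.gcd_dvd_right d s1)
      rwa [Nat.div_mul_cancel (Nat.gcd_dvd_left d s1)] at h2
  have ppos : 0 < d / g := Nat.div_pos (Nat.le_of_dvd dpos gdvd_d) gpos
  refine ⟨⟨M, fun m hm u v => ?_⟩, ⟨⟨ppos, M, fun m hm u v => ?_⟩, ?_⟩⟩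
  -- Part 1: A and B walks agree eventually
  · constructor
    · exact walk_mono' hSsub hTsub
    · intro h
      obtain ⟨hu, hv, hc⟩ := (char m hm u v).mp h
      exact hMwalk u hu v hv m hm hc
  -- Part 2a: d/g is a period of B
  · have hcong : ((m : ℤ) * s1) ≡ (((m + d / g : ℕ) : ℤ) * s1) [ZMOD (d : ℤ)] := by
      rw [Int.modEq_iff_dvd]
      have e : ((m + d / g : ℕ) : ℤ) * s1 - (m : ℤ) * s1 = ((d / g * s1 : ℕ) : ℤ) := by
        push_cast; ring
      rw [e]
      exact Int.natCast_dvd_natCast.mpr ((dvd_iff (d / g)).mpr dvd_rfl)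
    rw [char m hm u v, char (m + d / g) (by omega) u v]
    constructor
    · rintro ⟨hu, hv, hc⟩; exact ⟨hu, hv, hc.trans hcong⟩
    · rintro ⟨hu, hv, hc⟩; exact ⟨hu, hv, hc.trans hcong.symm⟩
  -- Part 2b: d/g is a lower bound on eventual periods of B
  · rintro q ⟨hq0, M', hM'⟩
    obtain ⟨u, v, hu, hv, hc⟩ := realize (((max M M' : ℕ) : ℤ) * s1)
    have h1 : hasWalk n Sstar Tstar u v (max M M') :=
      (char (max M M') (le_max_left _ _) u v).mpr ⟨hu, hv, hc⟩
    have h2 := (hM' (max M M') (le_max_right _ _) u v).mp h1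
    have h3 := ((char (max M M' + q) (by omega) u v).mp h2).2.2
    have h4 : (d : ℤ) ∣ ((max M M' + q : ℕ) : ℤ) * s1 - ((max M M' : ℕ) : ℤ) * s1 :=
      Int.ModEq.dvd (hc.symm.trans h3)
    have h5 : (d : ℤ) ∣ ((q * s1 : ℕ) : ℤ) := by
      have e : ((max M M' + q : ℕ) : ℤ) * s1 - ((max M M' : ℕ) : ℤ) * s1
          = ((q * s1 : ℕ) : ℤ) := by push_cast; ring
      rwa [e] at h4
    have h6 : d ∣ q * s1 := by exact_mod_cast h5
    exact Nat.le_of_dvd hq0 ((dvd_iff q).mp h6)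
end
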